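/- arXiv:1607.07535 — 4 statements merged into one kernel-verified Lean document; each statement's English description precedes it below -/
import Mathlib

section
/- If G is an undirected graph on n nodes with nonnegative symmetric adjacency weights, L its Laplacian, and P a nonnegative diagonal pinning matrix such that from the leader (pinned nodes) every node is reachable (i.e., every node has a path to some pinned node), then the matrix M = L + P is symmetric positive definite. -/
open Matrix

/-- If W is a symmetric nonnegative adjacency matrix with zero diagonal,
L its Laplacian, P a nonnegative diagonal pinning matrix, and every node has a path
(through positive-weight edges) to some pinned node, then M = L + P is symmetric
positive definite. -/
theorem laplacian_plus_pinning_posdef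
    (n : ℕ) (W : Matrix (Fin n) (Fin n) ℝ)
    (hWsymm : ∀ i j, W i j = W j i)
    (hWnonneg : ∀ i j, 0 ≤ W i j)
    (hWdiag : ∀ i, W i i = 0)
    (p : Fin n → ℝ) (hp : ∀ i, 0 ≤ p i)
    (L : Matrix (Fin n) (Fin n) ℝ)
    (hL : ∀ i j, L i j = if i = j then ∑ k, W i k else - W i j)
    (hreach : ∀ i : Fin n, ∃ j : Fin n,
      Relation.ReflTransGen (fun a b => 0 < W a b) i j ∧ 0 < p j) :
    (L + Matrix.diagonal p).IsSymm ∧ (L + Matrix.diagonal p).PosDef := by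
  have hMsymm : (L + Matrix.diagonal p).IsSymm := by
    rw [Matrix.IsSymm]
    ext i j
    simp only [Matrix.transpose_apply, Matrix.add_apply, hL, Matrix.diagonal_apply]
    by_cases h : i = j
    · subst h; simp
    · simp [h, Ne.symm h, hWsymm i j]
  refine ⟨hMsymm, Matrix.posDef_iff_dotProduct_mulVec.mpr ⟨?_, ?_⟩⟩
  · rw [Matrix.IsSymm] at hMsymm
    rw [Matrix.IsHermitian]
    ext i j
    rw [Matrix.conjTranspose_apply, star_trivial]
    exact congrFun (congrFun hMsymm i) j
  intro x hx
  have hLrow : ∀ i, ∑ j, L i j * x j = ∑ j, W i j * (x i - x j) := by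
    intro i
    have h1 : ∀ j : Fin n, L i j * x j
        = (if j = i then (∑ k, W i k) * x i else 0) - W i j * x j := by
      intro j
      rw [hL]
      by_cases h : i = j
      · subst h; simp [hWdiag i]
      · simp [h, Ne.symm h]
    simp only [h1, Finset.sum_sub_distrib, Finset.sum_ite_eq' Finset.univ i,
      Finset.mem_univ, if_true]
    rw [Finset.sum_mul, ← Finset.sum_sub_distrib]
    exact Finset.sum_congr rfl fun j _ => by ring
  have hMx : ∀ i, ((L + Matrix.diagonal p) *ᵥ x) i
      = (∑ j, W i j * (x i - x j)) + p i * x i := by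
    intro i
    simp only [Matrix.mulVec, dotProduct, Matrix.add_apply, Matrix.diagonal_apply,
      add_mul, Finset.sum_add_distrib]
    rw [hLrow]
    congr 1
    simp [ite_mul, Finset.sum_ite_eq]
  set S : ℝ := ∑ i, ∑ j, W i j * (x i * (x i - x j)) with hS
  set T : ℝ := ∑ i, ∑ j, W i j * (x i - x j) ^ 2 with hT
  set P : ℝ := ∑ i, p i * x i ^ 2 with hP
  have hQ : star x ⬝ᵥ ((L + Matrix.diagonal p) *ᵥ x) = S + P := by
    simp only [dotProduct, hMx, star, Pi.star_apply, star_trivial, id_eq]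
    rw [hS, hP, ← Finset.sum_add_distrib]
    refine Finset.sum_congr rfl fun i _ => ?_
    rw [mul_add, Finset.mul_sum]
    congr 1
    · exact Finset.sum_congr rfl fun j _ => by ring
    · ring
  have hswap : S = ∑ i, ∑ j, W i j * (x j * (x j - x i)) := by
    rw [hS, Finset.sum_comm]
    exact Finset.sum_congr rfl fun i _ => Finset.sum_congr rfl fun j _ => by
      rw [hWsymm]
  have h2S : 2 * S = T := by
    rw [two_mul]
    nth_rewrite 2 [hswap]
    rw [hS, hT, ← Finset.sum_add_distrib]
    refine Finset.sum_congr rfl fun i _ => ?_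
    rw [← Finset.sum_add_distrib]
    exact Finset.sum_congr rfl fun j _ => by ring
  have hTnonneg : 0 ≤ T := by
    refine Finset.sum_nonneg fun i _ => Finset.sum_nonneg fun j _ => ?_
    exact mul_nonneg (hWnonneg i j) (sq_nonneg _)
  have hPnonneg : 0 ≤ P := by
    refine Finset.sum_nonneg fun i _ => mul_nonneg (hp i) (sq_nonneg _)
  have hSnonneg : 0 ≤ S := by linarith
  rw [hQ]
  by_contra hle
  push_neg at hle
  have hS0 : S = 0 := le_antisymm (by linarith) hSnonneg
  have hP0 : P = 0 := le_antisymm (by linarith) hPnonneg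
  have hT0 : T = 0 := by linarith
  have hTterm : ∀ i j : Fin n, W i j * (x i - x j) ^ 2 = 0 := by
    intro i j
    have h := (Finset.sum_eq_zero_iff_of_nonneg
      (fun i _ => Finset.sum_nonneg fun j _ =>
        mul_nonneg (hWnonneg i j) (sq_nonneg _))).mp hT0 i (Finset.mem_univ i)
    exact (Finset.sum_eq_zero_iff_of_nonneg
      (fun j _ => mul_nonneg (hWnonneg i j) (sq_nonneg _))).mp h j (Finset.mem_univ j)
  have hPterm : ∀ i : Fin n, p i * x i ^ 2 = 0 := by
    intro i
    exact (Finset.sum_eq_zero_iff_of_nonneg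
      (fun i _ => mul_nonneg (hp i) (sq_nonneg _))).mp hP0 i (Finset.mem_univ i)
  have hedge : ∀ a b : Fin n, 0 < W a b → x a = x b := by
    intro a b hab
    have := hTterm a b
    rcases mul_eq_zero.mp this with h | h
    · exact absurd h (ne_of_gt hab)
    · have := pow_eq_zero_iff (n := 2) (by norm_num) |>.mp h
      linarith [sub_eq_zero.mp this]
  have hconst : ∀ a b : Fin n, Relation.ReflTransGen (fun a b => 0 < W a b) a b →
      x a = x b := by
    intro a b h
    induction h with
    | refl => rfl
    | tail _ hbc ih => exact ih.trans (hedge _ _ hbc)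
  have hzero : ∀ i, x i = 0 := by
    intro i
    obtain ⟨j, hpath, hpj⟩ := hreach i
    have hxj : x j = 0 := by
      have := hPterm j
      rcases mul_eq_zero.mp this with h | h
      · exact absurd h (ne_of_gt hpj)
      · exact pow_eq_zero_iff (n := 2) (by norm_num) |>.mp h
    rw [hconst i j hpath, hxj]
  exact hx (funext hzero)
end

section
/- The vector field f(z₁,z₂) = (z₂, -c₁·sig(M z₁)^{α₁} - c₂·sig(M z₂)^{α₂}) on ℝ^{mn} × ℝ^{mn} is homogeneous of degree λ = α₁ - 1 with respect to the dilation assigning weight 2 to each component of z₁ and weight α₁+1 to each component of z₂, provided α₂ = 2α₁/(α₁+1). -/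
open Matrix

noncomputable def sigv {k : ℕ} (κ : ℝ) (z : Fin k → ℝ) : Fin k → ℝ :=
  fun i => |z i| ^ κ * Real.sign (z i)

lemma sign_mul_pos (c x : ℝ) (hc : 0 < c) : Real.sign (c * x) = Real.sign x := by
  rcases lt_trichotomy x 0 with h | h | h
  · rw [Real.sign_of_neg h, Real.sign_of_neg (mul_neg_of_pos_of_neg hc h)]
  · simp [h]
  · rw [Real.sign_of_pos h, Real.sign_of_pos (mul_pos hc h)]

lemma sigv_smul {k : ℕ} (κ c : ℝ) (hc : 0 < c) (z : Fin k → ℝ) :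
    sigv κ (c • z) = c ^ κ • sigv κ z := by
  funext i
  simp only [sigv, Pi.smul_apply, smul_eq_mul, abs_mul, abs_of_pos hc,
    sign_mul_pos c (z i) hc,
    Real.mul_rpow hc.le (abs_nonneg _)]
  ring

/-- The vector field f(z₁,z₂) = (z₂, -c₁ sig(Mz₁)^{α₁} - c₂ sig(Mz₂)^{α₂})
is homogeneous of degree λ = α₁ - 1 with dilation weight 2 on z₁ and α₁+1 on z₂,
provided α₂ = 2α₁/(α₁+1). -/
theorem closed_loop_homogeneous (N : ℕ) (M : Matrix (Fin N) (Fin N) ℝ)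
    (c₁ c₂ α₁ α₂ : ℝ) (hc₁ : 0 < c₁) (hc₂ : 0 < c₂)
    (hα₁ : 0 < α₁) (hα₁' : α₁ < 1) (hα₂ : α₂ = 2 * α₁ / (α₁ + 1))
    (f₁ f₂ : (Fin N → ℝ) → (Fin N → ℝ) → (Fin N → ℝ))
    (hf₁ : ∀ z₁ z₂, f₁ z₁ z₂ = z₂)
    (hf₂ : ∀ z₁ z₂, f₂ z₁ z₂ =
      - c₁ • sigv α₁ (M.mulVec z₁) - c₂ • sigv α₂ (M.mulVec z₂)) :
    ∀ (ε : ℝ), 0 < ε → ∀ z₁ z₂ : Fin N → ℝ,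
      f₁ (ε ^ (2:ℝ) • z₁) (ε ^ (α₁ + 1) • z₂) = ε ^ ((α₁ - 1) + 2) • f₁ z₁ z₂ ∧
      f₂ (ε ^ (2:ℝ) • z₁) (ε ^ (α₁ + 1) • z₂) = ε ^ ((α₁ - 1) + (α₁ + 1)) • f₂ z₁ z₂ := by
  intro ε hε z₁ z₂
  have hεne : ε ≠ 0 := hε.ne'
  have hden : α₁ + 1 ≠ 0 := by linarith
  have h1 : (0:ℝ) < ε ^ (2:ℝ) := Real.rpow_pos_of_pos hε _
  have h2 : (0:ℝ) < ε ^ (α₁ + 1) := Real.rpow_pos_of_pos hε _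
  constructor
  · rw [hf₁, hf₁, show (α₁ - 1) + 2 = α₁ + 1 by ring]
  · rw [hf₂, hf₂, Matrix.mulVec_smul, Matrix.mulVec_smul,
      sigv_smul α₁ _ h1, sigv_smul α₂ _ h2,
      ← Real.rpow_mul hε.le, ← Real.rpow_mul hε.le]
    have e1 : 2 * α₁ = (α₁ - 1) + (α₁ + 1) := by ring
    have e2 : (α₁ + 1) * α₂ = (α₁ - 1) + (α₁ + 1) := by
      rw [hα₂]; field_simp; ring
    rw [e1, e2, smul_sub, ← smul_assoc, ← smul_assoc, ← smul_assoc, ← smul_assoc]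
    congr 2 <;> simp [smul_eq_mul] <;> ring
end

section
/- Let V : [0,∞) → [0,∞) be differentiable with V(t₀) = V₀ ≥ 0 and suppose V'(t) ≤ -c·√(V(t)) for some constant c > 0 whenever V(t) > 0. Then V(t) = 0 for all t ≥ t₀ + 2√(V₀)/c. -/
/-- If V is nonnegative and differentiable on [t₀,∞) with
V'(t) ≤ -c√(V t) whenever V(t) > 0, then V(t) = 0 for all t ≥ t₀ + 2√(V t₀)/c. -/
theorem finite_time_convergence (V : ℝ → ℝ) (t₀ c : ℝ) (hc : 0 < c)
    (hV0 : ∀ t, t₀ ≤ t → 0 ≤ V t)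
    (hVdiff : ∀ t, t₀ ≤ t → DifferentiableAt ℝ V t)
    (hV' : ∀ t, t₀ ≤ t → 0 < V t → deriv V t ≤ -c * Real.sqrt (V t)) :
    ∀ t, t₀ + 2 * Real.sqrt (V t₀) / c ≤ t → V t = 0 := by
  intro t ht
  have hsqrt0 : 0 ≤ Real.sqrt (V t₀) := Real.sqrt_nonneg _
  have hT : t₀ ≤ t := by
    have : 0 ≤ 2 * Real.sqrt (V t₀) / c := by positivity
    linarith
  have hcontOn : ∀ a b, t₀ ≤ a → ContinuousOn V (Set.Icc a b) := by
    intro a b ha x hx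
    exact ((hVdiff x (le_trans ha hx.1)).continuousAt).continuousWithinAt
  by_cases hzero : ∃ s ∈ Set.Icc t₀ t, V s = 0
  · -- once V is zero, it stays zero
    obtain ⟨s, hs, hVs⟩ := hzero
    set K := Set.Icc s t ∩ V ⁻¹' {0} with hKdef
    have hKne : K.Nonempty := ⟨s, ⟨le_refl s, hs.2⟩, hVs⟩
    have hKc : IsClosed K :=
      (hcontOn s t hs.1).preimage_isClosed_of_isClosed isClosed_Icc isClosed_singleton
    have hKcpt : IsCompact K :=
      isCompact_Icc.of_isClosed_subset hKc Set.inter_subset_left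
    set u := sSup K with hudef
    have hu : u ∈ K := hKcpt.sSup_mem hKne
    have huI : u ∈ Set.Icc s t := hu.1
    have hVu : V u = 0 := hu.2
    have hut0 : t₀ ≤ u := le_trans hs.1 huI.1
    have hpos : ∀ r ∈ Set.Ioc u t, 0 < V r := by
      intro r hr
      rcases (hV0 r (le_trans hut0 hr.1.le)).lt_or_eq with h | h
      · exact h
      · exfalso
        have hrK : r ∈ K := ⟨⟨le_trans huI.1 hr.1.le, hr.2⟩, h.symm⟩
        have : r ≤ u := le_csSup hKcpt.bddAbove hrK
        exact absurd this (not_le.mpr hr.1)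
    have hanti : AntitoneOn V (Set.Icc u t) := by
      apply antitoneOn_of_deriv_nonpos (convex_Icc u t) (hcontOn u t hut0)
      · intro x hx
        rw [interior_Icc] at hx
        exact (hVdiff x (le_trans hut0 hx.1.le)).differentiableWithinAt
      · intro x hx
        rw [interior_Icc] at hx
        have hxp : 0 < V x := hpos x ⟨hx.1, hx.2.le⟩
        have := hV' x (le_trans hut0 hx.1.le) hxp
        nlinarith [Real.sqrt_nonneg (V x)]
    have : V t ≤ V u := hanti ⟨le_refl u, huI.2⟩ ⟨huI.2, le_refl t⟩ huI.2
    have := hV0 t hT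
    linarith [hVu ▸ ‹V t ≤ V u›]
  · -- V positive on the whole interval: √V decays at rate c/2
    push_neg at hzero
    have hpos : ∀ s ∈ Set.Icc t₀ t, 0 < V s := by
      intro s hs
      exact (hV0 s hs.1).lt_of_ne' (hzero s hs)
    set g : ℝ → ℝ := fun y => Real.sqrt (V y) + c / 2 * y with hgdef
    have hgderiv : ∀ x ∈ Set.Ioo t₀ t,
        HasDerivAt g (deriv V x / (2 * Real.sqrt (V x)) + c / 2) x := by
      intro x hx
      have hxp : 0 < V x := hpos x ⟨hx.1.le, hx.2.le⟩
      have h1 : HasDerivAt (fun y => Real.sqrt (V y))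
          (deriv V x / (2 * Real.sqrt (V x))) x :=
        ((hVdiff x hx.1.le).hasDerivAt).sqrt (ne_of_gt hxp)
      have h2 : HasDerivAt (fun y => c / 2 * y) (c / 2) x := by
        simpa using (hasDerivAt_id x).const_mul (c / 2)
      exact h1.add h2
    have hganti : AntitoneOn g (Set.Icc t₀ t) := by
      apply antitoneOn_of_deriv_nonpos (convex_Icc t₀ t)
      · intro x hx
        have hxp : 0 < V x := hpos x hx
        have h1 : HasDerivAt (fun y => Real.sqrt (V y))
            (deriv V x / (2 * Real.sqrt (V x))) x :=
          ((hVdiff x hx.1).hasDerivAt).sqrt (ne_of_gt hxp)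
        have h2 : HasDerivAt (fun y => c / 2 * y) (c / 2) x := by
          simpa using (hasDerivAt_id x).const_mul (c / 2)
        exact ((h1.add h2).differentiableAt).continuousAt.continuousWithinAt
      · intro x hx
        rw [interior_Icc] at hx
        exact ((hgderiv x hx).differentiableAt).differentiableWithinAt
      · intro x hx
        rw [interior_Icc] at hx
        rw [(hgderiv x hx).deriv]
        have hxp : 0 < V x := hpos x ⟨hx.1.le, hx.2.le⟩
        have hsq : 0 < Real.sqrt (V x) := Real.sqrt_pos.mpr hxp
        have hd := hV' x hx.1.le hxp
        have : deriv V x / (2 * Real.sqrt (V x)) ≤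
            (-c * Real.sqrt (V x)) / (2 * Real.sqrt (V x)) :=
          div_le_div_of_nonneg_right hd (by positivity)
        have heq : (-c * Real.sqrt (V x)) / (2 * Real.sqrt (V x)) = -c / 2 := by
          field_simp
        rw [heq] at this
        linarith
    have hgle : g t ≤ g t₀ := hganti ⟨le_refl t₀, hT⟩ ⟨hT, le_refl t⟩ hT
    have hkey : Real.sqrt (V t) ≤ Real.sqrt (V t₀) - c / 2 * (t - t₀) := by
      simp only [hgdef] at hgle
      linarith
    have h2 : Real.sqrt (V t₀) ≤ c / 2 * (t - t₀) := by
      have : 2 * Real.sqrt (V t₀) / c ≤ t - t₀ := by linarith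
      calc Real.sqrt (V t₀) = c / 2 * (2 * Real.sqrt (V t₀) / c) := by
            field_simp
        _ ≤ c / 2 * (t - t₀) := by
            apply mul_le_mul_of_nonneg_left this (by positivity)
    have hsle : Real.sqrt (V t) ≤ 0 := by linarith
    have hsge : 0 ≤ Real.sqrt (V t) := Real.sqrt_nonneg _
    have hs0 : Real.sqrt (V t) = 0 := le_antisymm hsle hsge
    have := Real.sq_sqrt (hV0 t hT)
    nlinarith
end

section
/- Let M be a symmetric positive definite N×N matrix and let a : [t₀,∞) → ℝ^N satisfy (whenever defined) ȧ(t) = -β·sgn(M a(t)) - d(t), where sup_t ‖d(t)‖ < β. Then along solutions, the function V(t) = (1/2)a(t)^T M a(t) satisfies V'(t) ≤ -(β - sup_t‖d(t)‖)·‖M a(t)‖₁ ≤ -(β - sup_t‖d(t)‖)·‖M a(t)‖ ≤ -(β - sup_t‖d(t)‖)·(λ_min(M)/√λ_max(M))·√(2V(t)). -/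
open Matrix

lemma sign_mul_self_eq_abs (x : ℝ) : Real.sign x * x = |x| := by
  rcases lt_trichotomy x 0 with h|h|h
  · rw [Real.sign_of_neg h, abs_of_neg h]; ring
  · simp [h]
  · rw [Real.sign_of_pos h, abs_of_pos h]; ring

lemma psd_key {N : ℕ} (M : Matrix (Fin N) (Fin N) ℝ) (hM : M.IsHermitian) (c : ℝ)
    (hc : ∀ i, 0 ≤ hM.eigenvalues i * hM.eigenvalues i - c * hM.eigenvalues i)
    (x : Fin N → ℝ) :
    c * (x ⬝ᵥ M *ᵥ x) ≤ (M *ᵥ x) ⬝ᵥ (M *ᵥ x) := by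
  set e := hM.eigenvalues with he
  set U : Matrix (Fin N) (Fin N) ℝ := (hM.eigenvectorUnitary : Matrix (Fin N) (Fin N) ℝ) with hU
  have hsUU : star U * U = 1 :=
    (Matrix.mem_unitaryGroup_iff').mp (Matrix.IsHermitian.eigenvectorUnitary hM).2
  have hspec : M = U * diagonal e * star U := by
    simpa [RCLike.ofReal_real_eq_id] using hM.spectral_theorem
  have hsym : ∀ i j, M i j = M j i := by
    intro i j
    have h1 : Mᴴ = M := hM
    have := congrFun (congrFun h1 i) j
    simpa [Matrix.conjTranspose_apply] using this.symm
  have hP : (M * M - c • M).PosSemidef := by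
    have heq : M * M - c • M
        = U * diagonal (fun i => e i * e i - c * e i) * star U := by
      have h2 : M * M = U * (diagonal e * (diagonal e * star U)) := by
        conv_lhs => rw [hspec]
        simp only [Matrix.mul_assoc]
        rw [← Matrix.mul_assoc (star U) U, hsUU, Matrix.one_mul]
      have h3 : c • M = U * ((c • diagonal e) * star U) := by
        rw [hspec]
        simp only [Matrix.mul_assoc, Matrix.smul_mul, Matrix.mul_smul]
      have hdiag : (diagonal e * diagonal e - c • diagonal e : Matrix (Fin N) (Fin N) ℝ)
          = diagonal (fun i => e i * e i - c * e i) := by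
        rw [Matrix.diagonal_mul_diagonal, ← Matrix.diagonal_smul, ← Matrix.diagonal_sub]
        congr 1
      rw [h2, h3, ← Matrix.mul_assoc (diagonal e), ← Matrix.mul_sub, ← Matrix.sub_mul,
        hdiag, Matrix.mul_assoc]
    rw [heq]
    have := Matrix.PosSemidef.mul_mul_conjTranspose_same
      (Matrix.posSemidef_diagonal_iff.mpr hc) U
    rw [Matrix.star_eq_conjTranspose]
    exact this
  -- scalar consequence
  have h0 := hP.dotProduct_mulVec_nonneg x
  rw [star_trivial] at h0
  have hexp : (M * M - c • M) *ᵥ x = M *ᵥ (M *ᵥ x) - c • (M *ᵥ x) := by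
    rw [Matrix.sub_mulVec, ← Matrix.mulVec_mulVec, Matrix.smul_mulVec]
  rw [hexp, dotProduct_sub, dotProduct_smul, smul_eq_mul] at h0
  have hswap : x ᵥ* M = M *ᵥ x := by
    funext i
    simp only [Matrix.vecMul, Matrix.mulVec, dotProduct]
    exact Finset.sum_congr rfl fun j _ => by rw [hsym i j]; ring
  have hsd : x ⬝ᵥ (M *ᵥ (M *ᵥ x)) = (M *ᵥ x) ⬝ᵥ (M *ᵥ x) := by
    rw [Matrix.dotProduct_mulVec, hswap]
  rw [hsd] at h0
  linarith

/-- Along solutions of ȧ = -β sgn(Ma) - d with sup‖d‖ < β and M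
symmetric positive definite, V = (1/2)aᵀMa satisfies
V' ≤ -(β - D)‖Ma‖₁ ≤ -(β - D)‖Ma‖₂ ≤ -(β - D)(λmin/√λmax)√(2V). -/
theorem sliding_mode_estimator_lyapunov (N : ℕ)
    (M : Matrix (Fin N) (Fin N) ℝ) (hM : M.IsHermitian) (hMpd : M.PosDef)
    (lmin lmax : ℝ)
    (hmin : ∀ i, lmin ≤ hM.eigenvalues i) (hmin' : ∃ i, hM.eigenvalues i = lmin)
    (hmax : ∀ i, hM.eigenvalues i ≤ lmax) (hmax' : ∃ i, hM.eigenvalues i = lmax)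
    (β D : ℝ) (hβ : 0 < β)
    (t₀ : ℝ) (a d : ℝ → Fin N → ℝ)
    (hd : ∀ t, t₀ ≤ t → Real.sqrt (∑ i, (d t i)^2) ≤ D) (hDβ : D < β)
    (ha : ∀ t, t₀ ≤ t → HasDerivAt a
      (fun i => -β * Real.sign (M.mulVec (a t) i) - d t i) t)
    (V : ℝ → ℝ) (hV : ∀ t, V t = (1/2) * (a t ⬝ᵥ M.mulVec (a t))) :
    ∀ t, t₀ ≤ t →
      deriv V t ≤ -(β - D) * (∑ i, |M.mulVec (a t) i|) ∧
      -(β - D) * (∑ i, |M.mulVec (a t) i|) ≤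
        -(β - D) * Real.sqrt (∑ i, (M.mulVec (a t) i)^2) ∧
      -(β - D) * Real.sqrt (∑ i, (M.mulVec (a t) i)^2) ≤
        -(β - D) * (lmin / Real.sqrt lmax) * Real.sqrt (2 * V t) := by
  intro t ht
  set x : Fin N → ℝ := M.mulVec (a t) with hx
  set a' : Fin N → ℝ := fun i => -β * Real.sign (x i) - d t i with ha'
  -- basic eigenvalue facts
  obtain ⟨i0, hi0⟩ := hmin'
  have hlmin0 : 0 < lmin := hi0 ▸ hMpd.eigenvalues_pos i0
  have hlmax0 : 0 < lmax := lt_of_lt_of_le (hi0 ▸ hMpd.eigenvalues_pos i0) (hi0 ▸ hmax i0)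
  have hlml : lmin ≤ lmax := le_trans (hmin i0) (hmax i0)
  have hsym : ∀ i j, M i j = M j i := by
    intro i j
    have h1 : Mᴴ = M := hM
    have := congrFun (congrFun h1 i) j
    simpa [Matrix.conjTranspose_apply] using this.symm
  have hD0 : 0 ≤ D := le_trans (Real.sqrt_nonneg _) (hd t ht)
  have hβD : 0 < β - D := by linarith
  -- derivative of each coordinate
  have hA : ∀ i, HasDerivAt (fun s => a s i) (a' i) t := fun i =>
    (hasDerivAt_pi.mp (ha t ht)) i
  -- derivative of V
  have hxval : ∀ i, x i = ∑ j, M i j * a t j := fun i => by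
    simp [hx, Matrix.mulVec, dotProduct]
  have hVd : HasDerivAt V
      ((1/2) * ∑ i, (a' i * ∑ j, M i j * a t j + a t i * ∑ j, M i j * a' j)) t := by
    have hVeq : V = fun s => (1/2 : ℝ) * ∑ i, a s i * ∑ j, M i j * a s j := by
      funext s
      rw [hV s]
      simp [Matrix.mulVec, dotProduct]
    rw [hVeq]
    exact (HasDerivAt.fun_sum (fun i _ =>
      (hA i).mul (HasDerivAt.fun_sum (fun j _ => (hA j).const_mul (M i j))))).const_mul (1/2)
  have hderiv : deriv V t
      = (1/2) * ∑ i, (a' i * ∑ j, M i j * a t j + a t i * ∑ j, M i j * a' j) :=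
    hVd.deriv
  -- symmetry swap
  have hswap2 : ∑ i, a t i * ∑ j, M i j * a' j = ∑ i, a' i * ∑ j, M i j * a t j := by
    simp_rw [Finset.mul_sum]
    rw [Finset.sum_comm]
    exact Finset.sum_congr rfl fun i _ => Finset.sum_congr rfl fun j _ => by
      rw [hsym j i]; ring
  have hderiv2 : deriv V t = ∑ i, a' i * x i := by
    rw [hderiv, Finset.sum_add_distrib, hswap2]
    rw [show ∑ i, a' i * x i = ∑ i, a' i * ∑ j, M i j * a t j from
      Finset.sum_congr rfl fun i _ => by rw [hxval i]]
    ring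
  -- expand the sum
  have h3 : ∑ i, a' i * x i = -β * (∑ i, |x i|) - ∑ i, d t i * x i := by
    have hterm : ∀ i, a' i * x i = -β * |x i| - d t i * x i := fun i => by
      rw [ha']
      calc (-β * Real.sign (x i) - d t i) * x i
          = -β * (Real.sign (x i) * x i) - d t i * x i := by ring
        _ = -β * |x i| - d t i * x i := by rw [sign_mul_self_eq_abs]
    calc ∑ i, a' i * x i = ∑ i, (-β * |x i| - d t i * x i) :=
          Finset.sum_congr rfl fun i _ => hterm i
      _ = -β * (∑ i, |x i|) - ∑ i, d t i * x i := by
          rw [Finset.sum_sub_distrib, Finset.mul_sum]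
  -- Cauchy-Schwarz bound on the disturbance term
  have hcs : -∑ i, d t i * x i ≤ D * Real.sqrt (∑ i, (x i)^2) := by
    have h := Real.sum_mul_le_sqrt_mul_sqrt Finset.univ (fun i => -(d t i)) x
    simp only [neg_mul, Finset.sum_neg_distrib, neg_sq] at h
    calc -∑ i, d t i * x i ≤ Real.sqrt (∑ i, (d t i)^2) * Real.sqrt (∑ i, (x i)^2) := h
      _ ≤ D * Real.sqrt (∑ i, (x i)^2) :=
          mul_le_mul_of_nonneg_right (hd t ht) (Real.sqrt_nonneg _)
  -- l2 ≤ l1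
  have h21 : Real.sqrt (∑ i, (x i)^2) ≤ ∑ i, |x i| := by
    have h1 : (∑ i, (x i)^2) = ∑ i, |x i|^2 := by simp [sq_abs]
    rw [h1]
    calc Real.sqrt (∑ i, |x i|^2) ≤ Real.sqrt ((∑ i, |x i|)^2) :=
          Real.sqrt_le_sqrt (Finset.sum_sq_le_sq_sum_of_nonneg fun i _ => abs_nonneg _)
      _ = ∑ i, |x i| := Real.sqrt_sq (Finset.sum_nonneg fun i _ => abs_nonneg _)
  refine ⟨?_, ?_, ?_⟩
  · have := mul_le_mul_of_nonneg_left h21 hD0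
    rw [hderiv2, h3]
    nlinarith [hcs]
  · nlinarith [h21]
  · -- third inequality
    have hq0 : 0 ≤ a t ⬝ᵥ x := by
      have := hMpd.posSemidef.dotProduct_mulVec_nonneg (a t)
      rwa [star_trivial] at this
    have hkey : (lmin^2/lmax) * (a t ⬝ᵥ x) ≤ x ⬝ᵥ x := by
      refine psd_key M hM (lmin^2/lmax) (fun i => ?_) (a t)
      have hei : lmin ≤ hM.eigenvalues i := hmin i
      have hcle : lmin^2/lmax ≤ lmin := by
        rw [div_le_iff₀ hlmax0]; nlinarith
      nlinarith [hMpd.eigenvalues_pos i]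
    have h2V : 2 * V t = a t ⬝ᵥ x := by rw [hV t]; ring
    have hxx : x ⬝ᵥ x = ∑ i, (x i)^2 := by
      simp [dotProduct, sq]
    have hmain : lmin / Real.sqrt lmax * Real.sqrt (2 * V t)
        ≤ Real.sqrt (∑ i, (x i)^2) := by
      have hl : lmin / Real.sqrt lmax = Real.sqrt (lmin^2/lmax) := by
        rw [Real.sqrt_div (sq_nonneg lmin), Real.sqrt_sq hlmin0.le]
      rw [hl, ← Real.sqrt_mul (div_nonneg (sq_nonneg _) hlmax0.le)]
      apply Real.sqrt_le_sqrt
      rw [h2V, ← hxx]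
      exact hkey
    nlinarith [mul_le_mul_of_nonneg_left hmain hβD.le]
end
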